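/- arXiv:1602.05748 — 2 statements merged into one kernel-verified Lean document; each statement's English description precedes it below -/
import Mathlib

section
/- Let G be a 2-connected undirected graph of order n and let S be a subset of the vertices of G. If d(x) ≥ n/2 for all vertices x ∈ S, then S is cyclable in G; that is, G contains a cycle through all the vertices of S. -/
/-!
Basic definitions for finite digraphs (no loops, no multiple arcs), where the arc
relation is `A : V → V → Prop`.  Paths and cycles are given as lists of (distinct)
vertices.
-/

variable {V : Type*}

/-- A (directed) path, given by the list of its vertices. -/
def IsPathOn (A : V → V → Prop) (l : List V) : Prop :=
  l ≠ [] ∧ l.Nodup ∧ l.Chain' A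

/-- A (directed) cycle, given by the list of its vertices; its length (number of
arcs) equals the length of the list. -/
def IsCycleOn (A : V → V → Prop) (l : List V) : Prop :=
  2 ≤ l.length ∧ l.Nodup ∧ l.Chain' A ∧
    ∀ a ∈ l.getLast?, ∀ b ∈ l.head?, A a b

/-- A directed path from `a` to `b`. -/
def IsPathFromTo (A : V → V → Prop) (l : List V) (a b : V) : Prop :=
  IsPathOn A l ∧ l.head? = some a ∧ l.getLast? = some b

/-- Out-degree `d⁺(x)`. -/
noncomputable def outDeg (A : V → V → Prop) (x : V) : ℕ := {y | A x y}.ncard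

/-- In-degree `d⁻(x)`. -/
noncomputable def inDeg (A : V → V → Prop) (x : V) : ℕ := {y | A y x}.ncard

/-- Degree `d(x) = d⁺(x) + d⁻(x)`. -/
noncomputable def deg (A : V → V → Prop) (x : V) : ℕ := outDeg A x + inDeg A x

/-- Out-degree into a set, `d⁺(x, S)`. -/
noncomputable def outDegOn (A : V → V → Prop) (x : V) (S : Set V) : ℕ :=
  {y ∈ S | A x y}.ncard

/-- In-degree from a set, `d⁻(x, S)`. -/
noncomputable def inDegOn (A : V → V → Prop) (x : V) (S : Set V) : ℕ :=
  {y ∈ S | A y x}.ncard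

/-- Degree with respect to a set, `d(x, S) = d⁺(x, S) + d⁻(x, S)`. -/
noncomputable def degOn (A : V → V → Prop) (x : V) (S : Set V) : ℕ :=
  outDegOn A x S + inDegOn A x S

/-- Two distinct vertices are adjacent if there is an arc between them in some
direction. -/
def DAdj (A : V → V → Prop) (x y : V) : Prop := A x y ∨ A y x

/-- `D` is `S`-strongly connected: between any two distinct vertices of `S` there
are directed paths in both directions. -/
def SetStronglyConnected (A : V → V → Prop) (S : Set V) : Prop :=
  ∀ x ∈ S, ∀ y ∈ S, x ≠ y → ∃ l, IsPathFromTo A l x y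

/-- Strong connectivity. -/
def StronglyConnected (A : V → V → Prop) : Prop :=
  ∀ x y : V, x ≠ y → ∃ l, IsPathFromTo A l x y

/-- 2-strong connectivity: at least 3 vertices, and deleting any vertex leaves a
strongly connected digraph. -/
def TwoStronglyConnected [Fintype V] (A : V → V → Prop) : Prop :=
  3 ≤ Fintype.card V ∧
    ∀ w x y : V, x ≠ w → y ≠ w → x ≠ y → ∃ l, IsPathFromTo A l x y ∧ w ∉ l

/-- Condition `A₀` for a set `Y` of vertices. -/
def CondA0 [Fintype V] (A : V → V → Prop) (Y : Set V) : Prop :=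
  ∀ x ∈ Y, ∀ y ∈ Y, ∀ z ∈ Y,
    x ≠ y → x ≠ z → y ≠ z → ¬ DAdj A x y →
      (¬ A x z →
        deg A x + deg A y + outDeg A x + inDeg A z ≥ 3 * Fintype.card V - 2) ∧
      (¬ A z x →
        deg A x + deg A y + inDeg A x + outDeg A z ≥ 3 * Fintype.card V - 2)

/-- A `C`-bypass: a path of length at least two whose end-vertices lie on the
cycle `c` and whose internal vertices avoid `c`. -/
def IsBypass (A : V → V → Prop) (c p : List V) : Prop :=
  IsPathOn A p ∧ 3 ≤ p.length ∧
    (∀ a ∈ p.head?, a ∈ c) ∧ (∀ b ∈ p.getLast?, b ∈ c) ∧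
    ∀ v ∈ p.tail.dropLast, v ∉ c

/-- The vertex `y` can be inserted into the path `p`. -/
def CanInsert (A : V → V → Prop) (p : List V) (y : V) : Prop :=
  ∃ i, ∃ h : i + 1 < p.length, A (p[i]'(Nat.lt_of_succ_lt h)) y ∧ A y (p[i+1]'h)

/-- A `(C, x)`-path: a path from a vertex `u` of the cycle `c` to `x`, meeting `c`
only in `u`. -/
def IsCtoXPath (A : V → V → Prop) (c l : List V) (u x : V) : Prop :=
  IsPathFromTo A l u x ∧ u ∈ c ∧ ∀ v ∈ l, v ∈ c → v = u

/-- An `(x, C)`-path: a path from `x` to a vertex `v` of the cycle `c`, meeting `c`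
only in `v`. -/
def IsXtoCPath (A : V → V → Prop) (c l : List V) (x v : V) : Prop :=
  IsPathFromTo A l x v ∧ v ∈ c ∧ ∀ w ∈ l, w ∈ c → w = v


namespace ShiAux
variable {W : Type*} {G : SimpleGraph W}

/-- cyclic list predicate -/
def GC (G : SimpleGraph W) (l : List W) : Prop :=
  3 ≤ l.length ∧ l.Nodup ∧ l.Chain' G.Adj ∧
    ∀ a ∈ l.getLast?, ∀ b ∈ l.head?, G.Adj a b

lemma chain'_rev {l : List W} (h : l.Chain' G.Adj) : l.reverse.Chain' G.Adj := by
  rw [List.Chain', List.isChain_reverse]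
  have : (fun a b => G.Adj b a) = G.Adj := by
    funext a b; exact propext ⟨fun h => h.symm, fun h => h.symm⟩
  rwa [this]

lemma walkOfChain : ∀ (l : List W) (a b : W), l.Chain' G.Adj → l.head? = some a →
    l.getLast? = some b → ∃ p : G.Walk a b, p.support = l
  | [], a, b => by simp
  | [c], a, b => by
    intro _ h1 h2
    simp only [List.head?_cons, Option.some_inj] at h1
    simp only [List.getLast?_singleton, Option.some_inj] at h2
    subst h1; subst h2
    exact ⟨SimpleGraph.Walk.nil, rfl⟩
  | c :: d :: t, a, b => by
    intro hc h1 h2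
    simp only [List.head?_cons, Option.some_inj] at h1
    subst h1
    rw [List.Chain', List.isChain_cons_cons] at hc
    obtain ⟨p', hp'⟩ := walkOfChain (d :: t) d b hc.2 rfl (by simpa using h2)
    exact ⟨SimpleGraph.Walk.cons hc.1 p', by simp [hp']⟩

lemma secondOfEdgeHead : ∀ {a b c : W} (p : G.Walk a b), p.support.Nodup →
    s(a, c) ∈ p.edges → p.support.tail.head? = some c := by
  intro a b c p
  induction p with
  | nil => simp
  | @cons a d b h q _ =>
    intro hnd hmem
    rw [SimpleGraph.Walk.edges_cons, List.mem_cons] at hmem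
    rcases hmem with heq | hmem
    · rw [Sym2.eq_iff] at heq
      rcases heq with ⟨-, rfl⟩ | ⟨rfl, rfl⟩
      · rw [SimpleGraph.Walk.support_cons, List.tail_cons, SimpleGraph.Walk.support_eq_cons q]
        rfl
      · exact absurd rfl (G.ne_of_adj h)
    · exfalso
      have ha : a ∈ q.support := q.fst_mem_support_of_mem_edges hmem
      rw [SimpleGraph.Walk.support_cons, List.nodup_cons] at hnd
      exact hnd.1 ha

lemma GC_toWalk {l : List W} (h : GC G l) :
    ∃ (a : W) (c : G.Walk a a), c.IsCycle ∧ ∀ v ∈ l, v ∈ c.support := by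
  obtain ⟨hlen, hnd, hch, hwrap⟩ := h
  obtain ⟨a, tl, rfl⟩ : ∃ a tl, l = a :: tl := by
    cases l with
    | nil => simp at hlen
    | cons a tl => exact ⟨a, tl, rfl⟩
  have htl : tl ≠ [] := by rintro rfl; simp at hlen
  obtain ⟨b, hb⟩ : ∃ b, tl.getLast? = some b := by
    cases hbb : tl.getLast? with
    | none => exact absurd (List.getLast?_eq_none_iff.mp hbb) htl
    | some b => exact ⟨b, rfl⟩
  have hlast : (a :: tl).getLast? = some b := by
    rw [List.getLast?_cons, hb]; rfl
  obtain ⟨p, hp⟩ := walkOfChain (a :: tl) a b hch rfl hlast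
  have hpath : p.support.Nodup := by rwa [hp]
  have hba : G.Adj b a := hwrap b hlast a rfl
  set c : G.Walk a a := p.append (SimpleGraph.Walk.cons hba SimpleGraph.Walk.nil) with hc
  have hsup : c.support = (a :: tl) ++ [a] := by
    rw [hc, SimpleGraph.Walk.support_append, hp]; rfl
  refine ⟨a, c, ⟨⟨⟨?_⟩, ?_⟩, ?_⟩, ?_⟩
  · -- edges nodup
    have hedges : c.edges = p.edges ++ [s(b, a)] := by
      rw [hc, SimpleGraph.Walk.edges_append]; rfl
    rw [hedges]
    rw [List.nodup_append]
    refine ⟨SimpleGraph.Walk.edges_nodup_of_support_nodup hpath, List.nodup_singleton _, ?_⟩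
    intro e he f hmem hef; subst hef
    simp only [List.mem_singleton] at hmem
    subst hmem
    have : s(a, b) ∈ p.edges := by rwa [Sym2.eq_swap]
    have h2 := secondOfEdgeHead p hpath this
    rw [hp] at h2
    simp only [List.tail_cons] at h2
    -- tl.head? = some b, tl.getLast? = some b, tl nodup → tl = [b] → length = 2 < 3
    obtain ⟨ys, hys⟩ := List.getLast?_eq_some_iff.mp hb
    obtain ⟨zs, hzs⟩ := List.head?_eq_some_iff.mp h2
    rw [List.nodup_cons] at hnd
    have hndtl := hnd.2
    rw [hys] at hndtl hzs
    cases ys with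
    | nil =>
      rw [hys] at hlen
      simp at hlen
    | cons y ys' =>
      simp only [List.cons_append, List.cons.injEq] at hzs
      rw [List.cons_append, List.nodup_cons] at hndtl
      apply hndtl.1
      rw [hzs.1]
      simp
  · -- c ≠ nil
    intro hnil
    have := congrArg List.length hsup
    rw [hnil] at this
    simp at this
  · -- support tail nodup
    have : c.support.tail = tl ++ [a] := by rw [hsup]; rfl
    rw [this, List.nodup_append]
    rw [List.nodup_cons] at hnd
    exact ⟨hnd.2, List.nodup_singleton _, by
      intro v hv w hmem hvw; subst hvw
      simp only [List.mem_singleton] at hmem; subst hmem; exact hnd.1 hv⟩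
  · intro v hv
    rw [hsup]
    exact List.mem_append_left _ hv

end ShiAux

section Dev2
namespace ShiAux
variable {W : Type*} {G : SimpleGraph W}

lemma connAvoid {w : W} (hc : (G.induce ({w}ᶜ : Set W)).Connected) (x y : W)
    (hx : x ≠ w) (hy : y ≠ w) :
    ∃ l : List W, l.Chain' G.Adj ∧ l.Nodup ∧ l.head? = some x ∧
      l.getLast? = some y ∧ ∀ v ∈ l, v ≠ w := by
  classical
  have hx' : x ∈ ({w}ᶜ : Set W) := by simpa using hx
  have hy' : y ∈ ({w}ᶜ : Set W) := by simpa using hy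
  obtain ⟨q⟩ := hc.preconnected ⟨x, hx'⟩ ⟨y, hy'⟩
  set p := (q.toPath : (G.induce ({w}ᶜ : Set W)).Walk ⟨x, hx'⟩ ⟨y, hy'⟩) with hp
  refine ⟨p.support.map Subtype.val, ?_, ?_, ?_, ?_, ?_⟩
  · refine List.isChain_map_of_isChain _ (fun a b hab => ?_) p.isChain_adj_support
    simpa using hab
  · exact (q.toPath.property.support_nodup).map Subtype.val_injective
  · rw [List.head?_map, SimpleGraph.Walk.support_eq_cons p]
    rfl
  · rw [List.getLast?_map]
    have : p.support.getLast? = some ⟨y, hy'⟩ := by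
      have hne : p.support ≠ [] := p.support_ne_nil
      rw [List.getLast?_eq_getLast hne, SimpleGraph.Walk.getLast_support]
    rw [this]; rfl
  · intro v hv
    simp only [List.mem_map] at hv
    obtain ⟨⟨v', hv'⟩, _, rfl⟩ := hv
    simpa using hv'

lemma chain_second {l : List W} (hch : l.Chain' G.Adj) {x y : W}
    (hhead : l.head? = some x) (hlast : l.getLast? = some y) (hxy : x ≠ y) :
    ∃ a, G.Adj x a ∧ a ∈ l := by
  obtain ⟨ys, rfl⟩ := List.head?_eq_some_iff.mp hhead
  cases ys with
  | nil => simp at hlast; exact absurd hlast hxy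
  | cons a t =>
    rw [List.Chain', List.isChain_cons_cons] at hch
    exact ⟨a, hch.1, by simp⟩

variable [Fintype W]

lemma exists3 (hcard : 3 ≤ Fintype.card W) (a b : W) : ∃ c, c ≠ a ∧ c ≠ b := by
  classical
  by_contra h
  push_neg at h
  have : (Finset.univ : Finset W) ⊆ {a, b} := by
    intro c _
    rcases Classical.em (c = a) with rfl | hca
    · simp
    · simp [h c hca]
  have := Finset.card_le_card this
  rw [Finset.card_univ] at this
  have : ({a, b} : Finset W).card ≤ 2 := Finset.card_le_two
  omega

lemma twoNbrs (hcard : 3 ≤ Fintype.card W)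
    (hconn : ∀ w : W, (G.induce ({w}ᶜ : Set W)).Connected) (z : W) :
    ∃ a b, G.Adj z a ∧ G.Adj z b ∧ a ≠ b := by
  obtain ⟨w0, hw0z, -⟩ := exists3 hcard z z
  obtain ⟨v, hvz, hvw0⟩ := exists3 hcard z w0
  obtain ⟨l, hch, -, hh, hl, -⟩ := connAvoid (hconn w0) z v (Ne.symm hw0z) hvw0
  obtain ⟨a, haz, -⟩ := chain_second hch hh hl hvz.symm
  obtain ⟨v', hv'z, hv'a⟩ := exists3 hcard z a
  obtain ⟨l', hch', -, hh', hl', hav'⟩ :=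
    connAvoid (hconn a) z v' (G.ne_of_adj haz) hv'a
  obtain ⟨b, hbz, hbl⟩ := chain_second hch' hh' hl' hv'z.symm
  exact ⟨b, a, hbz, haz, fun hba => (hav' b hbl) (hba ▸ rfl)⟩

lemma cycleThrough (hcard : 3 ≤ Fintype.card W)
    (hconn : ∀ w : W, (G.induce ({w}ᶜ : Set W)).Connected) (z : W) :
    ∃ l, GC G l ∧ z ∈ l := by
  obtain ⟨a, b, hza, hzb, hab⟩ := twoNbrs hcard hconn z
  obtain ⟨p, hch, hnd, hh, hl, havoid⟩ :=
    connAvoid (hconn z) a b (G.ne_of_adj hza).symm (G.ne_of_adj hzb).symm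
  have hpne : p ≠ [] := by rintro rfl; simp at hh
  have hplen : 2 ≤ p.length := by
    rcases p with - | ⟨c, t⟩
    · simp at hh
    · rcases t with - | ⟨d, t'⟩
      · simp only [List.head?_cons, Option.some_inj] at hh
        simp only [List.getLast?_singleton, Option.some_inj] at hl
        exact absurd (hh ▸ hl) hab
      · simp
  refine ⟨z :: p, ⟨by simp; omega, ?_, ?_, ?_⟩, by simp⟩
  · rw [List.nodup_cons]
    exact ⟨fun hz => havoid z hz rfl, hnd⟩
  · rw [List.Chain', List.isChain_cons]
    exact ⟨fun y hy => by rw [hh, Option.mem_def, Option.some_inj] at hy; exact hy ▸ hza, hch⟩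
  · intro c hc d hd
    rw [List.getLast?_cons, hl] at hc
    simp only [Option.getD_some, Option.mem_def, Option.some_inj, List.head?_cons] at hc hd
    subst hc; subst hd
    exact hzb.symm

end ShiAux
end Dev2

section Dev3
namespace ShiAux
variable {W : Type*} {G : SimpleGraph W}

lemma firstHit (K : Set W) :
    ∀ (l : List W), l.Chain' G.Adj → l.Nodup → (∃ v ∈ l, v ∈ K) →
      ∃ (p : List W) (u : W), p.Chain' G.Adj ∧ p.Nodup ∧ p.head? = l.head? ∧ p.getLast? = some u ∧
        u ∈ K ∧ (∀ v ∈ p.dropLast, v ∉ K) ∧ ∀ v ∈ p, v ∈ l := by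
  intro l
  induction l with
  | nil => rintro - - ⟨v, hv, -⟩; simp at hv
  | cons h t ih =>
    intro hch hnd hex
    by_cases hK : h ∈ K
    · exact ⟨[h], h, List.isChain_singleton h, List.nodup_singleton h, rfl, rfl, hK,
        by simp, by simp⟩
    · have hex' : ∃ v ∈ t, v ∈ K := by
        obtain ⟨v, hv, hvK⟩ := hex
        rcases List.mem_cons.mp hv with rfl | hv'
        · exact absurd hvK hK
        · exact ⟨v, hv', hvK⟩
      rw [List.nodup_cons] at hnd
      obtain ⟨p', u, hc', hn', hh', hl', huK, hdrop', hsub'⟩ :=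
        ih (List.isChain_cons.mp hch).2 hnd.2 hex'
      have hp'ne : p' ≠ [] := by rintro rfl; simp at hl'
      refine ⟨h :: p', u, ?_, ?_, rfl, ?_, huK, ?_, ?_⟩
      · rw [List.Chain', List.isChain_cons]
        refine ⟨fun y hy => ?_, hc'⟩
        rw [hh'] at hy
        exact (List.isChain_cons.mp hch).1 y hy
      · rw [List.nodup_cons]
        exact ⟨fun hmem => hnd.1 (hsub' h hmem), hn'⟩
      · rw [List.getLast?_cons, hl']; rfl
      · intro v hv
        rw [List.dropLast_cons_of_ne_nil hp'ne, List.mem_cons] at hv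
        rcases hv with rfl | hv'
        · exact hK
        · exact hdrop' v hv'
      · intro v hv
        rcases List.mem_cons.mp hv with rfl | hv'
        · simp
        · exact List.mem_cons_of_mem _ (hsub' v hv')

lemma firstS (S : Set W) :
    ∀ (D : List W), (∃ v ∈ D, v ∈ S) →
      ∃ D1 y1 D2, D = D1 ++ y1 :: D2 ∧ y1 ∈ S ∧ ∀ v ∈ D1, v ∉ S := by
  intro D
  induction D with
  | nil => rintro ⟨v, hv, -⟩; simp at hv
  | cons h t ih =>
    intro hex
    by_cases hS : h ∈ S
    · exact ⟨[], h, t, rfl, hS, by simp⟩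
    · have hex' : ∃ v ∈ t, v ∈ S := by
        obtain ⟨v, hv, hvS⟩ := hex
        rcases List.mem_cons.mp hv with rfl | hv'
        · exact absurd hvS hS
        · exact ⟨v, hv', hvS⟩
      obtain ⟨D1, y1, D2, hD, hy1, hD1⟩ := ih hex'
      refine ⟨h :: D1, y1, D2, by rw [hD]; rfl, hy1, ?_⟩
      intro v hv
      rcases List.mem_cons.mp hv with rfl | hv'
      · exact hS
      · exact hD1 v hv'

lemma rotateGC {l1 l2 : List W} {u : W} (h : GC G (l1 ++ u :: l2)) :
    GC G (u :: (l2 ++ l1)) ∧ ∀ v, (v ∈ u :: (l2 ++ l1) ↔ v ∈ l1 ++ u :: l2) := by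
  obtain ⟨hlen, hnd, hch, hwrap⟩ := h
  have hperm : (l1 ++ u :: l2).Perm (u :: (l2 ++ l1)) := by
    have h0 := List.perm_append_comm (l₁ := l1) (l₂ := u :: l2)
    simpa using h0
  have hch2 : (u :: l2 ++ l1).Chain' G.Adj := by
    have : l1 ++ u :: l2 = l1 ++ ((u :: l2)) := rfl
    rw [this, List.Chain', List.isChain_append] at hch
    obtain ⟨hc1, hc2, hj⟩ := hch
    have goal : ((u :: l2) ++ l1).Chain' G.Adj := by
      rw [List.Chain', List.isChain_append]
      refine ⟨hc2, hc1, ?_⟩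
      intro a ha b hb
      -- a = getLast (u::l2), b = head l1; use wrap of original
      have hl1ne : l1 ≠ [] := by rintro rfl; simp at hb
      have hlast : (l1 ++ u :: l2).getLast? = some a := by
        rw [List.getLast?_append]
        rw [Option.mem_def] at ha
        rw [ha]; rfl
      have hhead : (l1 ++ u :: l2).head? = some b := by
        rw [List.head?_append]
        rw [Option.mem_def] at hb
        rw [List.head?_eq_head hl1ne] at hb ⊢
        rw [Option.some_inj] at hb
        rw [hb]; rfl
      exact hwrap a hlast b hhead
    exact goal
  refine ⟨⟨by rw [hperm.length_eq] at hlen; exact hlen, hperm.nodup hnd, hch2, ?_⟩,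
    fun v => ⟨fun hv => hperm.mem_iff.mpr hv, fun hv => hperm.mem_iff.mp hv⟩⟩
  intro a ha b hb
  simp only [List.head?_cons, Option.mem_def, Option.some_inj] at hb
  subst hb
  rcases List.eq_nil_or_concat l1 with rfl | ⟨l1', c, rfl⟩
  · simp only [List.append_nil] at ha
    exact hwrap a (by simpa using ha) u (by simp)
  · rw [List.concat_eq_append] at ha hch
    have ha' : a = c := by
      have heq : (u :: (l2 ++ (l1' ++ [c]))) = (u :: (l2 ++ l1')) ++ [c] := by simp
      rw [Option.mem_def] at ha
      rw [heq, List.getLast?_concat, Option.some_inj] at ha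
      exact ha.symm
    subst ha'
    have heq2 : (l1' ++ [a]) ++ u :: l2 = l1' ++ (a :: u :: l2) := by simp
    rw [heq2, List.Chain', List.isChain_append] at hch
    exact (List.isChain_cons_cons.mp hch.2.1).1

end ShiAux
end Dev3

/-- Theorem A, Shi. -/
theorem shi_cyclable_of_degrees {W : Type*} [Fintype W]
    (G : SimpleGraph W) [DecidableRel G.Adj]
    (h2conn : 3 ≤ Fintype.card W ∧
      ∀ w : W, (G.induce ({w}ᶜ : Set W)).Connected)
    (S : Set W) (hdeg : ∀ x ∈ S, 2 * G.degree x ≥ Fintype.card W) :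
    ∃ (v : W) (c : G.Walk v v), c.IsCycle ∧ ∀ s ∈ S, s ∈ c.support := by
  classical
  obtain ⟨hcard, hconn⟩ := h2conn
  have hne : Nonempty W := by
    rw [← Fintype.card_pos_iff]; omega
  obtain ⟨z0⟩ := hne
  set Sc : List W → ℕ := fun l => (S ∩ {v | v ∈ l}).ncard with hSc
  set Val : Set ℕ := {k | ∃ l, ShiAux.GC G l ∧ Sc l = k} with hVal
  obtain ⟨l0, hl0, -⟩ := ShiAux.cycleThrough hcard hconn z0
  have hVne : Val.Nonempty := ⟨Sc l0, l0, hl0, rfl⟩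
  have hVbdd : BddAbove Val := ⟨Fintype.card W, by
    rintro k ⟨l, -, rfl⟩
    calc Sc l ≤ (Set.univ : Set W).ncard :=
          Set.ncard_le_ncard (Set.subset_univ _) Set.finite_univ
    _ = Fintype.card W := by rw [Set.ncard_univ, Nat.card_eq_fintype_card]⟩
  obtain ⟨Cl, hCl, hClSc⟩ := Nat.sSup_mem hVne hVbdd
  have hmax : ∀ l, ShiAux.GC G l → Sc l ≤ Sc Cl := by
    intro l hl; rw [hClSc]; exact le_csSup hVbdd ⟨l, hl, rfl⟩
  have no_better : ∀ x, x ∈ S → x ∉ Cl → ∀ l', ShiAux.GC G l' → x ∈ l' →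
      (∀ w ∈ Cl, w ∈ S → w ∈ l') → False := by
    intro x hxS hxCl l' hl' hxl' hcond
    have hsub : S ∩ {v | v ∈ Cl} ⊂ S ∩ {v | v ∈ l'} := by
      constructor
      · rintro v ⟨hvS, hvCl⟩; exact ⟨hvS, hcond v hvCl hvS⟩
      · intro hcont
        exact hxCl (hcont ⟨hxS, hxl'⟩).2
    have hlt := Set.ncard_lt_ncard hsub (Set.toFinite _)
    have h2 := hmax l' hl'
    simp only [hSc] at h2
    omega
  have hmain : ∀ x, x ∈ S → x ∈ Cl := by
    by_contra hcon
    push_neg at hcon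
    obtain ⟨x, hxS, hxCl⟩ := hcon
    -- find an S-vertex on Cl
    have hy0 : ∃ y0, y0 ∈ Cl ∧ y0 ∈ S := by
      by_contra hno; push_neg at hno
      obtain ⟨l', hl', hx'⟩ := ShiAux.cycleThrough hcard hconn x
      exact no_better x hxS hxCl l' hl' hx' (fun w hw hwS => absurd hwS (hno w hw))
    obtain ⟨y0, hy0Cl, hy0S⟩ := hy0
    have hxy0 : x ≠ y0 := fun h => hxCl (h ▸ hy0Cl)
    -- a vertex of Cl different from y0
    have hc' : ∃ c', c' ∈ Cl ∧ c' ≠ y0 := by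
      by_contra hno; push_neg at hno
      obtain ⟨hlen, hnd, -, -⟩ := hCl
      have h0 : Cl.toFinset ⊆ {y0} := fun v hv => by
        simp only [List.mem_toFinset] at hv
        simp [hno v hv]
      have hcard2 := Finset.card_le_card h0
      rw [List.toFinset_card_of_nodup hnd] at hcard2
      simp at hcard2
      omega
    obtain ⟨c', hc'Cl, hc'y0⟩ := hc'
    -- path from x to Cl avoiding y0, first hit u
    obtain ⟨lw, hlwc, hlwn, hlwh, hlwl, hlwa⟩ :=
      ShiAux.connAvoid (hconn y0) x c' hxy0 hc'y0
    have hc'lw : c' ∈ lw := by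
      obtain ⟨ys, hys⟩ := List.getLast?_eq_some_iff.mp hlwl
      rw [hys]; simp
    obtain ⟨P1, u, hP1c, hP1n, hP1h, hP1l, huCl, hP1drop, hP1sub⟩ :=
      ShiAux.firstHit {v | v ∈ Cl} lw hlwc hlwn ⟨c', hc'lw, hc'Cl⟩
    rw [hlwh] at hP1h
    have huP1 : u ∈ P1 := by
      obtain ⟨ys, hys⟩ := List.getLast?_eq_some_iff.mp hP1l
      rw [hys]; simp
    have huy0 : u ≠ y0 := hlwa u (hP1sub u huP1)
    have hP1y0 : ∀ v ∈ P1, v ≠ y0 := fun v hv => hlwa v (hP1sub v hv)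
    -- decompose P1 = (x :: Q1) ++ [u]
    obtain ⟨rest0, hrest0⟩ := List.head?_eq_some_iff.mp hP1h
    obtain ⟨zs, hzs⟩ := List.getLast?_eq_some_iff.mp hP1l
    rw [hrest0] at hzs
    obtain ⟨Q1, hP1eq⟩ : ∃ Q1, rest0 = Q1 ++ [u] := by
      cases zs with
      | nil =>
        simp only [List.nil_append, List.cons.injEq] at hzs
        exact absurd (hzs.1 ▸ huCl) hxCl
      | cons z zs' =>
        simp only [List.cons_append, List.cons.injEq] at hzs
        exact ⟨zs', hzs.2⟩
    rw [hP1eq] at hrest0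
    -- hrest0 : P1 = x :: (Q1 ++ [u])
    rw [← List.cons_append] at hrest0
    -- hrest0 : P1 = (x :: Q1) ++ [u]
    have hP1C : ((x :: Q1) ++ [u]).Chain' G.Adj := hrest0 ▸ hP1c
    have hP1N : ((x :: Q1) ++ [u]).Nodup := hrest0 ▸ hP1n
    have hQ1Cl : ∀ v ∈ x :: Q1, v ∉ Cl := by
      intro v hv
      have : v ∈ P1.dropLast := by
        rw [hrest0, List.dropLast_concat]
        exact hv
      exact hP1drop v this
    -- rotate Cl at u
    obtain ⟨l1, l2, hsplit⟩ := List.append_of_mem huCl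
    obtain ⟨hCl', hmemrot⟩ := ShiAux.rotateGC (hsplit ▸ hCl)
    set D := l2 ++ l1 with hD0
    have hmemCl : ∀ v, (v ∈ u :: D ↔ v ∈ Cl) := fun v => (hmemrot v).trans (by rw [← hsplit])
    obtain ⟨hlen', hnd', hch', hwrap'⟩ := hCl'
    have hy0D : y0 ∈ D := by
      have h1 := (hmemCl y0).mpr hy0Cl
      rcases List.mem_cons.mp h1 with h2 | h2
      · exact absurd h2.symm huy0
      · exact h2
    -- first S-vertex split of D
    obtain ⟨D1, y1, D2, hDsplit, hy1S, hD1S⟩ := ShiAux.firstS S D ⟨y0, hy0D, hy0S⟩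
    have hy1Cl : y1 ∈ Cl := (hmemCl y1).mp (by rw [hDsplit]; simp)
    have hxy1 : x ≠ y1 := fun h => hxCl (h ▸ hy1Cl)
    -- the path R
    set E := (y1 :: D2).reverse with hE0
    have hEne : E ≠ [] := by simp [hE0]
    have hElast : E.getLast? = some y1 := by rw [hE0, List.getLast?_reverse]; rfl
    set R := (x :: Q1) ++ (u :: E) with hR0
    have hRhead : R.head? = some x := by rw [hR0]; rfl
    have hRlast : R.getLast? = some y1 := by
      rw [hR0, List.getLast?_append, List.getLast?_cons, hElast]
      rfl
    -- chain and nodup facts about D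
    have huD : u ∉ D := (List.nodup_cons.mp hnd').1
    have hndD : D.Nodup := (List.nodup_cons.mp hnd').2
    have hndD' : (D1 ++ y1 :: D2).Nodup := hDsplit ▸ hndD
    rw [List.nodup_append] at hndD'
    have hchD : D.Chain' G.Adj := (List.isChain_cons.mp hch').2
    have hchD' : (D1 ++ y1 :: D2).Chain' G.Adj := hDsplit ▸ hchD
    have hchYD : (y1 :: D2).Chain' G.Adj := (List.isChain_append.mp hchD').2.1
    have hgD : (u :: D).getLast? = (y1 :: D2).getLast? := by
      have : u :: D = (u :: D1) ++ (y1 :: D2) := by rw [hDsplit]; rfl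
      rw [this, List.getLast?_append]
      cases h : (y1 :: D2).getLast? with
      | none => simp at h
      | some g => rfl
    obtain ⟨g, hg⟩ : ∃ g, (y1 :: D2).getLast? = some g := by
      cases h : (y1 :: D2).getLast? with
      | none => simp at h
      | some g => exact ⟨g, rfl⟩
    have hAdjgu : G.Adj g u := hwrap' g (by rw [hgD]; exact hg) u rfl
    have hchYDu : ((y1 :: D2) ++ [u]).Chain' G.Adj := by
      rw [List.Chain', List.isChain_append]
      refine ⟨hchYD, List.isChain_singleton u, ?_⟩
      intro a ha b hb
      simp only [List.head?_cons, Option.mem_def, Option.some_inj] at hb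
      rw [hg, Option.mem_def, Option.some_inj] at ha
      subst ha; subst hb
      exact hAdjgu
    have hchuE : (u :: E).Chain' G.Adj := by
      have h1 := ShiAux.chain'_rev hchYDu
      rw [List.reverse_append] at h1
      simpa [hE0] using h1
    obtain ⟨hchxQ1, -, hjP1⟩ := List.isChain_append.mp hP1C
    have hRchain : R.Chain' G.Adj := by
      rw [hR0, List.Chain', List.isChain_append]
      refine ⟨hchxQ1, hchuE, ?_⟩
      intro a ha b hb
      simp only [List.head?_cons, Option.mem_def, Option.some_inj] at hb
      subst hb
      exact hjP1 a ha u rfl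
    have hmemE : ∀ v, v ∈ E ↔ v ∈ y1 :: D2 := by intro v; rw [hE0, List.mem_reverse]
    have hsubECl : ∀ v ∈ u :: E, v ∈ Cl := by
      intro v hv
      rcases List.mem_cons.mp hv with rfl | hv'
      · exact huCl
      · refine (hmemCl v).mp (List.mem_cons_of_mem _ ?_)
        rw [hDsplit]
        exact List.mem_append_right _ ((hmemE v).mp hv')
    obtain ⟨hndxQ1, -, -⟩ := List.nodup_append.mp hP1N
    have hRnodup : R.Nodup := by
      rw [hR0, List.nodup_append]
      refine ⟨hndxQ1, ?_, ?_⟩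
      · rw [List.nodup_cons]
        constructor
        · intro hu
          exact huD (hDsplit ▸ (List.mem_append_right _ ((hmemE u).mp hu)))
        · rw [hE0, List.nodup_reverse]
          exact hndD'.2.1
      · intro v hv w hv2 hvw; subst hvw
        exact hQ1Cl v hv (hsubECl v hv2)
    have hRlen : 3 ≤ R.length := by
      rw [hR0]
      simp only [List.length_append, List.length_cons, hE0, List.length_reverse]
      omega
    have hxR : x ∈ R := by rw [hR0]; simp
    have hy1R : y1 ∈ R := by
      rw [hR0]
      exact List.mem_append_right _ (List.mem_cons_of_mem _ ((hmemE y1).mpr (by simp)))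
    have hcover : ∀ w ∈ Cl, w ∈ S → w ∈ R := by
      intro w hwCl hwS
      rcases List.mem_cons.mp ((hmemCl w).mpr hwCl) with rfl | hwD
      · exact List.mem_append_right _ (by simp)
      · rw [hDsplit] at hwD
        rcases List.mem_append.mp hwD with hw1 | hw2
        · exact absurd hwS (hD1S w hw1)
        · exact List.mem_append_right _ (List.mem_cons_of_mem _ ((hmemE w).mpr hw2))
    -- fact2 : x and y1 are not adjacent
    have fact2 : ¬ G.Adj x y1 := by
      intro hadj
      refine no_better x hxS hxCl R ⟨hRlen, hRnodup, hRchain, ?_⟩ hxR hcover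
      intro a ha b hb
      rw [hRlast, Option.mem_def, Option.some_inj] at ha
      rw [hRhead, Option.mem_def, Option.some_inj] at hb
      subst ha; subst hb
      exact hadj.symm
    -- fact5 : no vertex off R and off Cl is adjacent to both x and y1
    have fact5 : ∀ w, w ∉ R → w ∉ Cl → ¬(G.Adj x w ∧ G.Adj y1 w) := by
      rintro w hwR hwCl ⟨hxw, hy1w⟩
      refine no_better x hxS hxCl (R ++ [w]) ⟨?_, ?_, ?_, ?_⟩
        (List.mem_append_left _ hxR) (fun w' hw' hw'S => List.mem_append_left _ (hcover w' hw' hw'S))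
      · rw [List.length_append]; omega
      · rw [List.nodup_append]
        exact ⟨hRnodup, List.nodup_singleton _, fun v hv w' hv2 hvw => by
          subst hvw; simp only [List.mem_singleton] at hv2; subst hv2; exact hwR hv⟩
      · rw [List.Chain', List.isChain_append]
        refine ⟨hRchain, List.isChain_singleton _, ?_⟩
        intro a ha b hb
        simp only [List.head?_cons, Option.mem_def, Option.some_inj] at hb
        rw [hRlast, Option.mem_def, Option.some_inj] at ha
        subst ha; subst hb
        exact hy1w
      · intro a ha b hb
        rw [List.getLast?_concat, Option.mem_def, Option.some_inj] at ha
        rw [List.head?_append, hRhead, Option.mem_def] at hb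
        simp only [Option.or, Option.some_inj] at hb
        subst ha; subst hb
        exact hxw.symm
    -- reversed P1 chain
    have hrevC : ((u :: Q1.reverse) ++ [x]).Chain' G.Adj := by
      have h1 := ShiAux.chain'_rev hP1C
      rw [List.reverse_append, List.reverse_cons] at h1
      simpa using h1
    obtain ⟨hchuQ1, -, hjux⟩ := List.isChain_append.mp hrevC
    have hndQ1 : Q1.Nodup := (List.nodup_cons.mp hndxQ1).2
    have hxQ1 : x ∉ Q1 := (List.nodup_cons.mp hndxQ1).1
    have huxQ1 : u ∉ x :: Q1 := by
      obtain ⟨-, -, hdisj⟩ := List.nodup_append.mp hP1N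
      intro hu
      exact hdisj u hu u (by simp) rfl
    have hsubDCl : ∀ v ∈ D, v ∈ Cl := fun v hv => (hmemCl v).mp (List.mem_cons_of_mem _ hv)
    -- fact4 : x has no neighbour in D1
    have fact4 : ∀ w ∈ D1, ¬ G.Adj x w := by
      intro w hwD1 hxw
      obtain ⟨A, B, hAB⟩ := List.append_of_mem hwD1
      have hDA : D = A ++ ((w :: B) ++ (y1 :: D2)) := by
        rw [hDsplit, hAB, List.append_assoc]
      have hchwB : ((w :: B) ++ (y1 :: D2)).Chain' G.Adj :=
        (List.isChain_append.mp (hDA ▸ hchD)).2.1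
      have hndwB : ((w :: B) ++ (y1 :: D2)).Nodup :=
        (List.nodup_append.mp (hDA ▸ hndD)).2.1
      have hsubD : ∀ v ∈ (w :: B) ++ (y1 :: D2), v ∈ D := by
        intro v hv; rw [hDA]; exact List.mem_append_right _ hv
      have hlastwB : ((w :: B) ++ (y1 :: D2)).getLast? = some g := by
        rw [List.getLast?_append, hg]; rfl
      set L4 := (x :: ((w :: B) ++ (y1 :: D2))) ++ (u :: Q1.reverse) with hL4
      refine no_better x hxS hxCl L4 ⟨?_, ?_, ?_, ?_⟩ (by rw [hL4]; simp) ?_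
      · rw [hL4]; simp only [List.length_append, List.length_cons]; omega
      · rw [hL4, List.nodup_append]
        refine ⟨?_, ?_, ?_⟩
        · rw [List.nodup_cons]
          exact ⟨fun hx2 => hxCl (hsubDCl x (hsubD x hx2)), hndwB⟩
        · rw [List.nodup_cons]
          exact ⟨fun hu2 => huxQ1 (List.mem_cons_of_mem _ (List.mem_reverse.mp hu2)),
            List.nodup_reverse.mpr hndQ1⟩
        · intro v hv w hv2 hvw; subst hvw
          rcases List.mem_cons.mp hv with rfl | hvD
          · rcases List.mem_cons.mp hv2 with rfl | hv3
            · exact hxCl huCl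
            · exact hxQ1 (List.mem_reverse.mp hv3)
          · have hvD' := hsubD v hvD
            rcases List.mem_cons.mp hv2 with rfl | hv3
            · exact huD hvD'
            · exact hQ1Cl v (List.mem_cons_of_mem _ (List.mem_reverse.mp hv3))
                (hsubDCl v hvD')
      · rw [hL4, List.Chain', List.isChain_append]
        refine ⟨?_, hchuQ1, ?_⟩
        · rw [List.isChain_cons]
          refine ⟨fun y hy => ?_, hchwB⟩
          simp only [List.cons_append, List.head?_cons, Option.mem_def, Option.some_inj] at hy
          subst hy
          exact hxw
        · intro a ha b hb
          simp only [List.head?_cons, Option.mem_def, Option.some_inj] at hb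
          subst hb
          rw [List.getLast?_cons, hlastwB, Option.mem_def, Option.some_inj] at ha
          simp only [Option.getD_some] at ha
          subst ha
          exact hAdjgu
      · intro a ha b hb
        rw [hL4, List.head?_append] at hb
        simp only [List.cons_append, List.head?_cons, Option.or, Option.mem_def,
          Option.some_inj] at hb
        subst hb
        rw [hL4, List.getLast?_append] at ha
        have h9 : (u :: Q1.reverse).getLast? = some a := by
          cases h8 : (u :: Q1.reverse).getLast? with
          | none => simp at h8
          | some a' =>
            rw [h8] at ha
            simpa using ha
        exact hjux a h9 x rfl
      · intro w' hw' hw'S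
        rcases List.mem_cons.mp ((hmemCl w').mpr hw') with rfl | hwD
        · rw [hL4]
          exact List.mem_append_right _ (by simp)
        · rw [hDsplit] at hwD
          rcases List.mem_append.mp hwD with hw1 | hw2
          · exact absurd hw'S (hD1S w' hw1)
          · rw [hL4]
            exact List.mem_append_left _ (List.mem_cons_of_mem _ (List.mem_append_right _ hw2))
    -- index facts
    have ht1pos : 0 < R.length := by omega
    have hrr0 : R.getD 0 x = x := by
      rw [hR0, List.cons_append, List.getD_cons_zero]
    have hrrlast : R.getD (R.length - 1) x = y1 := by
      have h := hRlast
      rw [List.getLast?_eq_getElem?] at h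
      rw [List.getD_eq_getElem?_getD, h]
      rfl
    have hrrmem : ∀ i, i < R.length → R.getD i x ∈ R := by
      intro i hi
      rw [List.getD_eq_getElem _ _ hi]
      exact List.getElem_mem hi
    have hrrinj : ∀ i, i < R.length → ∀ j, j < R.length → R.getD i x = R.getD j x → i = j := by
      intro i hi j hj hij
      rw [List.getD_eq_getElem _ _ hi, List.getD_eq_getElem _ _ hj] at hij
      exact (hRnodup.getElem_inj_iff).mp hij
    obtain ⟨Rtl, hRtl⟩ : ∃ Rtl, R = x :: Rtl := List.head?_eq_some_iff.mp hRhead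
    -- fact3 : crossing switch
    have fact3 : ∀ i, i + 1 < R.length → G.Adj y1 (R.getD i x) →
        G.Adj x (R.getD (i+1) x) → False := by
      intro i hi hy1i hxi1
      rcases Nat.eq_zero_or_pos i with rfl | hipos
      · rw [hrr0] at hy1i
        exact fact2 hy1i.symm
      by_cases hT : i + 1 = R.length - 1
      · rw [hT, hrrlast] at hxi1
        exact fact2 hxi1
      have hi2 : i + 2 < R.length := by omega
      have hdropne : R.drop (i+1) ≠ [] := by
        apply List.ne_nil_of_length_pos
        rw [List.length_drop]; omega
      have htakene : R.take (i+1) ≠ [] := by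
        apply List.ne_nil_of_length_pos
        rw [List.length_take]; omega
      have hp1 : (R.drop (i+1) ++ (R.take (i+1)).reverse).Perm
          (R.drop (i+1) ++ R.take (i+1)) := List.Perm.append_left _ (List.reverse_perm _)
      have hp3 : (R.drop (i+1) ++ (R.take (i+1)).reverse).Perm R := by
        have hp2 : (R.drop (i+1) ++ R.take (i+1)).Perm (R.take (i+1) ++ R.drop (i+1)) :=
          List.perm_append_comm
        have h := hp1.trans hp2
        rwa [List.take_append_drop] at h
      have hchsplit : (R.take (i+1) ++ R.drop (i+1)).Chain' G.Adj := by
        rw [List.take_append_drop]; exact hRchain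
      obtain ⟨hcTake, hcDrop, -⟩ := List.isChain_append.mp hchsplit
      have hlastdrop : (R.drop (i+1)).getLast? = some y1 := by
        cases h8 : (R.drop (i+1)).getLast? with
        | none => exact absurd (List.getLast?_eq_none_iff.mp h8) hdropne
        | some d0 =>
          have h9 : (R.take (i+1) ++ R.drop (i+1)).getLast? = some y1 := by
            rw [List.take_append_drop]; exact hRlast
          rw [List.getLast?_append, h8] at h9
          simpa using h9
      have hlasttake : (R.take (i+1)).getLast? = some (R.getD i x) := by
        have h7 : R.take (i+1) = R.take i ++ [R.getD i x] := by
          rw [List.take_succ, List.getElem?_eq_getElem (show i < R.length by omega),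
            List.getD_eq_getElem _ _ (show i < R.length by omega)]
          rfl
        rw [h7, List.getLast?_concat]
      have hheadtake : (R.take (i+1)).head? = some x := by
        rw [hRtl, List.take_succ_cons]; rfl
      have hheaddrop : (R.drop (i+1)).head? = some (R.getD (i+1) x) := by
        rw [List.head?_drop, List.getElem?_eq_getElem hi,
          List.getD_eq_getElem _ _ hi]
      refine no_better x hxS hxCl (R.drop (i+1) ++ (R.take (i+1)).reverse)
        ⟨?_, hp3.symm.nodup hRnodup, ?_, ?_⟩ (hp3.mem_iff.mpr hxR)
        (fun w' hw' hw'S => hp3.mem_iff.mpr (hcover w' hw' hw'S))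
      · rw [hp3.length_eq]; exact hRlen
      · rw [List.Chain', List.isChain_append]
        refine ⟨hcDrop, ShiAux.chain'_rev hcTake, ?_⟩
        intro a ha b hb
        rw [hlastdrop, Option.mem_def, Option.some_inj] at ha
        rw [List.head?_reverse, hlasttake, Option.mem_def, Option.some_inj] at hb
        subst ha; subst hb
        exact hy1i
      · intro a ha b hb
        rw [List.getLast?_append, List.getLast?_reverse, hheadtake, Option.mem_def] at ha
        simp only [Option.or, Option.some_inj] at ha
        rw [List.head?_append, hheaddrop, Option.mem_def] at hb
        simp only [Option.or, Option.some_inj] at hb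
        subst ha; subst hb
        exact hxi1
    -- the counting
    have hy1x : y1 ≠ x := fun h => hxy1 h.symm
    set RF := R.toFinset with hRF
    have hRFcard : RF.card = R.length := List.toFinset_card_of_nodup hRnodup
    set X := (Finset.range R.length).filter (fun i => G.Adj x (R.getD i x)) with hX
    set Y := (Finset.range R.length).filter (fun i => G.Adj y1 (R.getD i x)) with hY
    have h0X : 0 ∉ X := by
      rw [hX, Finset.mem_filter, hrr0]
      rintro ⟨-, h⟩
      exact G.irrefl h
    have hYtop : ∀ i ∈ Y, i + 1 < R.length := by
      intro i hi
      rw [hY, Finset.mem_filter, Finset.mem_range] at hi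
      rcases Nat.lt_or_ge (i+1) R.length with h | h
      · exact h
      · exfalso
        have : i = R.length - 1 := by omega
        rw [this, hrrlast] at hi
        exact G.irrefl hi.2
    have hcardXY : X.card + Y.card ≤ R.length - 1 := by
      have hY'card : (Y.image (· + 1)).card = Y.card :=
        Finset.card_image_of_injective _ (fun a b h => by omega)
      have hXY' : Disjoint X (Y.image (· + 1)) := by
        rw [Finset.disjoint_left]
        intro a haX haY'
        obtain ⟨i, hiY, rfl⟩ := Finset.mem_image.mp haY'
        rw [hY, Finset.mem_filter] at hiY
        rw [hX, Finset.mem_filter] at haX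
        exact fact3 i (hYtop i (by rw [hY, Finset.mem_filter]; exact hiY)) hiY.2 haX.2
      have hsub : X ∪ Y.image (· + 1) ⊆ (Finset.range R.length).erase 0 := by
        intro a ha
        rcases Finset.mem_union.mp ha with h | h
        · rw [Finset.mem_erase]
          rw [hX, Finset.mem_filter] at h
          exact ⟨fun h0 => h0X (h0 ▸ (by rw [hX, Finset.mem_filter]; exact h)), h.1⟩
        · obtain ⟨i, hiY, rfl⟩ := Finset.mem_image.mp h
          rw [Finset.mem_erase, Finset.mem_range]
          exact ⟨by omega, hYtop i hiY⟩
      have h1 := Finset.card_le_card hsub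
      rw [Finset.card_union_of_disjoint hXY', hY'card,
        Finset.card_erase_of_mem (Finset.mem_range.mpr ht1pos), Finset.card_range] at h1
      exact h1
    have hXcard : X.card = (G.neighborFinset x ∩ RF).card := by
      refine Finset.card_bij (fun i _ => R.getD i x) ?_ ?_ ?_
      · intro i hi
        rw [hX, Finset.mem_filter, Finset.mem_range] at hi
        rw [Finset.mem_inter, SimpleGraph.mem_neighborFinset, hRF, List.mem_toFinset]
        exact ⟨hi.2, hrrmem i hi.1⟩
      · intro i hi j hj hij
        rw [hX, Finset.mem_filter, Finset.mem_range] at hi hj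
        exact hrrinj i hi.1 j hj.1 hij
      · intro w hw
        rw [Finset.mem_inter, SimpleGraph.mem_neighborFinset, hRF, List.mem_toFinset] at hw
        obtain ⟨n, hn, hnw⟩ := List.mem_iff_getElem.mp hw.2
        have hgd : R.getD n x = w := by rw [List.getD_eq_getElem _ _ hn]; exact hnw
        refine ⟨n, ?_, hgd⟩
        rw [hX, Finset.mem_filter, Finset.mem_range, hgd]
        exact ⟨hn, hw.1⟩
    have hYcard : Y.card = (G.neighborFinset y1 ∩ RF).card := by
      refine Finset.card_bij (fun i _ => R.getD i x) ?_ ?_ ?_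
      · intro i hi
        rw [hY, Finset.mem_filter, Finset.mem_range] at hi
        rw [Finset.mem_inter, SimpleGraph.mem_neighborFinset, hRF, List.mem_toFinset]
        exact ⟨hi.2, hrrmem i hi.1⟩
      · intro i hi j hj hij
        rw [hY, Finset.mem_filter, Finset.mem_range] at hi hj
        exact hrrinj i hi.1 j hj.1 hij
      · intro w hw
        rw [Finset.mem_inter, SimpleGraph.mem_neighborFinset, hRF, List.mem_toFinset] at hw
        obtain ⟨n, hn, hnw⟩ := List.mem_iff_getElem.mp hw.2
        have hgd : R.getD n x = w := by rw [List.getD_eq_getElem _ _ hn]; exact hnw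
        refine ⟨n, ?_, hgd⟩
        rw [hY, Finset.mem_filter, Finset.mem_range, hgd]
        exact ⟨hn, hw.1⟩
    have huR : u ∈ R := by rw [hR0]; exact List.mem_append_right _ (by simp)
    have houtdisj : Disjoint (G.neighborFinset x \ RF) (G.neighborFinset y1 \ RF) := by
      rw [Finset.disjoint_left]
      intro w hw1 hw2
      rw [Finset.mem_sdiff, SimpleGraph.mem_neighborFinset, hRF, List.mem_toFinset] at hw1 hw2
      obtain ⟨hxw, hwR⟩ := hw1
      obtain ⟨hy1w, -⟩ := hw2
      by_cases hwCl : w ∈ Cl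
      · rcases List.mem_cons.mp ((hmemCl w).mpr hwCl) with rfl | hwD
        · exact hwR huR
        · rw [hDsplit] at hwD
          rcases List.mem_append.mp hwD with hw3 | hw4
          · exact fact4 w hw3 hxw
          · refine hwR ?_
            rw [hR0]
            exact List.mem_append_right _ (List.mem_cons_of_mem _ ((hmemE w).mpr hw4))
      · exact fact5 w hwR hwCl ⟨hxw, hy1w⟩
    have hout : (G.neighborFinset x \ RF).card + (G.neighborFinset y1 \ RF).card
        ≤ Fintype.card W - R.length := by
      have hsub2 : (G.neighborFinset x \ RF) ∪ (G.neighborFinset y1 \ RF)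
          ⊆ Finset.univ \ RF := by
        intro w hw
        rcases Finset.mem_union.mp hw with h | h <;>
          (rw [Finset.mem_sdiff] at h ⊢; exact ⟨Finset.mem_univ _, h.2⟩)
      have h1 := Finset.card_le_card hsub2
      rw [Finset.card_union_of_disjoint houtdisj] at h1
      rwa [Finset.card_sdiff_of_subset (Finset.subset_univ _), Finset.card_univ, hRFcard] at h1
    have hdx : G.degree x = (G.neighborFinset x ∩ RF).card
        + (G.neighborFinset x \ RF).card := (Finset.card_inter_add_card_sdiff _ _).symm
    have hdy : G.degree y1 = (G.neighborFinset y1 ∩ RF).card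
        + (G.neighborFinset y1 \ RF).card := (Finset.card_inter_add_card_sdiff _ _).symm
    have ht1n : R.length ≤ Fintype.card W := by
      rw [← hRFcard, ← Finset.card_univ]
      exact Finset.card_le_univ RF
    have hdegx := hdeg x hxS
    have hdegy := hdeg y1 hy1S
    omega
  obtain ⟨a, c, hcyc, hsup⟩ := ShiAux.GC_toWalk hCl
  exact ⟨a, c, hcyc, fun s hs => hsup s (hmain s hs)⟩
end

section
/- There exists, for every pair of integers m and n with 2 ≤ m ≤ n − 4, a digraph D of order n and a three-element subset Y = {x, y, z} of its vertices such that D is Y-strongly connected, Y satisfies condition A0, and D contains no directed cycle through all three vertices of Y. (Construction: take disjoint digraphs G of order m and H of order n−m with G Hamiltonian, a vertex y of H adjacent in both directions to all other vertices of H, vertices x, z of G with d^+(x,G) = m−1 and d(z,G) = 2(m−1); add all arcs ux and xu for u ∈ V(H) ∖ {y} and the arc yx.) -/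
/-!
Basic definitions for finite digraphs (no loops, no multiple arcs), where the arc
relation is `A : V → V → Prop`.  Paths and cycles are given as lists of (distinct)
vertices.
-/

variable {V : Type*}

def Rrel (m i j : ℕ) : Prop :=
  (i < m ∧ j < m ∧ i ≠ j) ∨ (i = m ∧ m < j) ∨ (m < i ∧ j = m) ∨
  (i = 0 ∧ m < j) ∨ (m < i ∧ j = 0) ∨ (i = m ∧ j = 0)

instance (m i j : ℕ) : Decidable (Rrel m i j) := by unfold Rrel; infer_instance

lemma setOf_ncard {n : ℕ} (Q : Fin n → Prop) [DecidablePred Q] :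
    {v | Q v}.ncard = (Finset.univ.filter Q).card := by
  rw [← Set.ncard_coe_finset]; congr 1; ext v; simp

lemma fin_filter_card (n : ℕ) (Q : ℕ → Prop) [DecidablePred Q] :
    (Finset.univ.filter (fun v : Fin n => Q v.val)).card = ((Finset.range n).filter Q).card := by
  apply Finset.card_bij (fun v _ => v.val)
  · intro a ha; simp at ha ⊢; simp_all
  · intro a _ b _ h; exact Fin.ext h
  · intro b hb; simp at hb; exact ⟨⟨b, hb.1⟩, by simp [hb.2], rfl⟩

lemma const_on_seg {V : Type*} (A : V → V → Prop) (x : V) (P : V → Prop)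
    (hstep : ∀ a b, A a b → a ≠ x → b ≠ x → (P a ↔ P b))
    (l : List V) (hch : l.Chain' A) :
    ∀ i j, (hij : i ≤ j) → (hj : j < l.length) →
      (∀ t, (ht1 : i ≤ t) → (ht2 : t ≤ j) → l.get ⟨t, by omega⟩ ≠ x) →
      (P (l.get ⟨i, by omega⟩) ↔ P (l.get ⟨j, hj⟩)) := by
  intro i j hij
  induction j, hij using Nat.le_induction with
  | base => intro _ _; rfl
  | succ j hij ih =>
    intro hj havoid
    have hj' : j < l.length := by omega
    have h1 := ih hj' (fun t ht ht2 => havoid t ht (by omega))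
    have harc : A (l.get ⟨j, hj'⟩) (l.get ⟨j+1, hj⟩) :=
      List.isChain_iff_getElem.mp hch j (by omega)
    exact h1.trans (hstep _ _ harc (havoid j (by omega) (by omega)) (havoid (j+1) (by omega) le_rfl))

/-- Remark 1: sharpness example. -/
theorem sharpness_example :
    ∀ m n : ℕ, 2 ≤ m → m ≤ n - 4 →
      ∃ (V : Type) (instV : Fintype V) (A : V → V → Prop) (x y z : V),
        @Fintype.card V instV = n ∧ (∀ v, ¬ A v v) ∧
        x ≠ y ∧ x ≠ z ∧ y ≠ z ∧
        SetStronglyConnected A {x, y, z} ∧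
        @CondA0 V instV A {x, y, z} ∧
        ¬ ∃ l : List V, IsCycleOn A l ∧ x ∈ l ∧ y ∈ l ∧ z ∈ l := by
  intro m n hm hmn
  have hn : m + 4 ≤ n := by omega
  set A : Fin n → Fin n → Prop := fun a b => Rrel m a.val b.val with hA
  refine ⟨Fin n, inferInstance, A, ⟨0, by omega⟩, ⟨m, by omega⟩, ⟨1, by omega⟩,
    by simp, ?_, ?_, ?_, ?_, ?_, ?_, ?_⟩
  · -- irreflexive
    intro v hv
    simp only [hA, Rrel] at hv
    omega
  · simp [Fin.ext_iff]; omega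
  · simp [Fin.ext_iff]
  · simp [Fin.ext_iff]; omega
  · -- SetStronglyConnected
    have path2 : ∀ (i j : ℕ) (hi : i < n) (hj : j < n), i ≠ j → Rrel m i j →
        ∃ l, IsPathFromTo A l ⟨i, hi⟩ ⟨j, hj⟩ := by
      intro i j hi hj hij h
      exact ⟨[⟨i, hi⟩, ⟨j, hj⟩], ⟨by simp, by simp [Fin.ext_iff, hij],
        List.isChain_pair.mpr h⟩, by simp, by simp⟩
    have path3 : ∀ (i j k : ℕ) (hi : i < n) (hj : j < n) (hk : k < n),
        i ≠ j → i ≠ k → j ≠ k → Rrel m i j → Rrel m j k →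
        ∃ l, IsPathFromTo A l ⟨i, hi⟩ ⟨k, hk⟩ := by
      intro i j k hi hj hk h1 h2 h3 a1 a2
      exact ⟨[⟨i, hi⟩, ⟨j, hj⟩, ⟨k, hk⟩], ⟨by simp, by simp [Fin.ext_iff, h1, h2, h3],
        List.isChain_cons_cons.mpr ⟨a1, List.isChain_pair.mpr a2⟩⟩, by simp, by simp⟩
    have path4 : ∀ (i j k o : ℕ) (hi : i < n) (hj : j < n) (hk : k < n) (ho : o < n),
        i ≠ j → i ≠ k → i ≠ o → j ≠ k → j ≠ o → k ≠ o →
        Rrel m i j → Rrel m j k → Rrel m k o →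
        ∃ l, IsPathFromTo A l ⟨i, hi⟩ ⟨o, ho⟩ := by
      intro i j k o hi hj hk ho h1 h2 h3 h4 h5 h6 a1 a2 a3
      exact ⟨[⟨i, hi⟩, ⟨j, hj⟩, ⟨k, hk⟩, ⟨o, ho⟩],
        ⟨by simp, by simp [Fin.ext_iff, h1, h2, h3, h4, h5, h6],
        List.isChain_cons_cons.mpr ⟨a1, List.isChain_cons_cons.mpr ⟨a2, List.isChain_pair.mpr a3⟩⟩⟩,
        by simp, by simp⟩
    intro a ha b hb hab
    simp only [Set.mem_insert_iff, Set.mem_singleton_iff] at ha hb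
    rcases ha with rfl | rfl | rfl <;> rcases hb with rfl | rfl | rfl
    · exact absurd rfl hab
    · exact path3 0 (m+1) m (by omega) (by omega) (by omega) (by omega) (by omega) (by omega)
        (by unfold Rrel; omega) (by unfold Rrel; omega)
    · exact path2 0 1 (by omega) (by omega) (by omega) (by unfold Rrel; omega)
    · exact path2 m 0 (by omega) (by omega) (by omega) (by unfold Rrel; omega)
    · exact absurd rfl hab
    · exact path3 m 0 1 (by omega) (by omega) (by omega) (by omega) (by omega) (by omega)
        (by unfold Rrel; omega) (by unfold Rrel; omega)
    · exact path2 1 0 (by omega) (by omega) (by omega) (by unfold Rrel; omega)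
    · exact path4 1 0 (m+1) m (by omega) (by omega) (by omega) (by omega) (by omega)
        (by omega) (by omega) (by omega) (by omega) (by omega)
        (by unfold Rrel; omega) (by unfold Rrel; omega) (by unfold Rrel; omega)
    · exact absurd rfl hab
  · -- CondA0
    have h0 : (0:ℕ) < n := by omega
    have h1 : (1:ℕ) < n := by omega
    have hmlt : m < n := by omega
    have hox : outDeg A ⟨0, h0⟩ = n - 2 := by
      simp only [outDeg, hA]
      rw [setOf_ncard, fin_filter_card]
      have he : (Finset.range n).filter (fun j => Rrel m 0 j) =
          ((Finset.range n).erase 0).erase m := by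
        ext j; simp [Rrel]; omega
      rw [he, Finset.card_erase_of_mem (by simp; omega),
        Finset.card_erase_of_mem (by simp; omega), Finset.card_range]
      omega
    have hix : inDeg A ⟨0, h0⟩ = n - 1 := by
      simp only [inDeg, hA]
      rw [setOf_ncard, fin_filter_card n (fun t => Rrel m t 0)]
      have he : (Finset.range n).filter (fun j => Rrel m j 0) = (Finset.range n).erase 0 := by
        ext j; simp [Rrel]; omega
      rw [he, Finset.card_erase_of_mem (by simp; omega), Finset.card_range]
    have hoy : outDeg A ⟨m, hmlt⟩ = n - m := by
      simp only [outDeg, hA]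
      rw [setOf_ncard, fin_filter_card]
      have he : (Finset.range n).filter (fun j => Rrel m m j) = insert 0 (Finset.Ioo m n) := by
        ext j; simp [Rrel]; omega
      rw [he, Finset.card_insert_of_notMem (by simp), Nat.card_Ioo]
      omega
    have hiy : inDeg A ⟨m, hmlt⟩ = n - m - 1 := by
      simp only [inDeg, hA]
      rw [setOf_ncard, fin_filter_card n (fun t => Rrel m t m)]
      have he : (Finset.range n).filter (fun j => Rrel m j m) = Finset.Ioo m n := by
        ext j; simp [Rrel]; omega
      rw [he, Nat.card_Ioo]
    have hoz : outDeg A ⟨1, h1⟩ = m - 1 := by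
      simp only [outDeg, hA]
      rw [setOf_ncard, fin_filter_card]
      have he : (Finset.range n).filter (fun j => Rrel m 1 j) = (Finset.range m).erase 1 := by
        ext j; simp [Rrel]; omega
      rw [he, Finset.card_erase_of_mem (by simp; omega), Finset.card_range]
    have hiz : inDeg A ⟨1, h1⟩ = m - 1 := by
      simp only [inDeg, hA]
      rw [setOf_ncard, fin_filter_card n (fun t => Rrel m t 1)]
      have he : (Finset.range n).filter (fun j => Rrel m j 1) = (Finset.range m).erase 1 := by
        ext j; simp [Rrel]; omega
      rw [he, Finset.card_erase_of_mem (by simp; omega), Finset.card_range]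
    have dy : deg A ⟨m, hmlt⟩ = 2 * (n - m) - 1 := by
      simp only [deg, hoy, hiy]; omega
    have dz : deg A ⟨1, h1⟩ = 2 * m - 2 := by
      simp only [deg, hoz, hiz]; omega
    intro x' hx' y' hy' z' hz' hxy hxz hyz hnadj
    simp only [Set.mem_insert_iff, Set.mem_singleton_iff] at hx' hy' hz'
    rcases hx' with rfl | rfl | rfl <;> rcases hy' with rfl | rfl | rfl <;>
        rcases hz' with rfl | rfl | rfl <;>
      first
      | exact absurd rfl hxy
      | exact absurd rfl hxz
      | exact absurd rfl hyz
      | (exfalso; apply hnadj; unfold DAdj; simp only [hA]; unfold Rrel; omega)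
      | (refine ⟨fun h => absurd ?_ h, fun h => absurd ?_ h⟩ <;>
          (simp only [hA]; unfold Rrel; omega))
      | (refine ⟨fun h => absurd ?_ h, fun _ => ?_⟩
         · simp only [hA]; unfold Rrel; omega
         · simp only [deg, Fintype.card_fin, dy, dz, hox, hix, hoy, hiy, hoz, hiz]
           omega)
  · -- no directed cycle through x, y, z
    have h0 : (0:ℕ) < n := by omega
    have h1 : (1:ℕ) < n := by omega
    have hmlt : m < n := by omega
    rintro ⟨l, ⟨hlen, hnd, hch, hwrap⟩, hxl, hyl, hzl⟩
    have hne : l ≠ [] := List.ne_nil_of_length_pos (by omega)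
    obtain ⟨ix, hixg⟩ := List.mem_iff_get.mp hxl
    obtain ⟨iy, hiyg⟩ := List.mem_iff_get.mp hyl
    obtain ⟨iz, hizg⟩ := List.mem_iff_get.mp hzl
    have hstep : ∀ a b : Fin n, A a b → a ≠ ⟨0, h0⟩ → b ≠ ⟨0, h0⟩ →
        ((a.val < m) ↔ (b.val < m)) := by
      intro a b hab ha hb
      simp only [hA] at hab
      unfold Rrel at hab
      rw [Ne, Fin.ext_iff] at ha hb
      simp only [] at ha hb
      omega
    have hwrap' : A (l.get ⟨l.length - 1, by omega⟩) (l.get ⟨0, by omega⟩) := by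
      have e1 : l.getLast hne = l.get ⟨l.length - 1, by omega⟩ := List.getLast_eq_getElem hne
      have e2 : l.head hne = l.get ⟨0, by omega⟩ := by
        simp [List.head_eq_getElem, List.get_eq_getElem]
      have h1' := hwrap (l.getLast hne) (by simp [List.getLast?_eq_getLast hne])
        (l.head hne) (by simp [List.head?_eq_head hne])
      rw [e1, e2] at h1'
      exact h1'
    have main : ∀ i j : Fin l.length, i.val ≤ j.val → l.get i ≠ ⟨0, h0⟩ →
        l.get j ≠ ⟨0, h0⟩ → ((l.get i).val < m ↔ (l.get j).val < m) := by
      intro i j hij hi hj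
      by_cases hbet : ∀ t, (ht1 : i.val ≤ t) → (ht2 : t ≤ j.val) →
          l.get ⟨t, by omega⟩ ≠ ⟨0, h0⟩
      · have := const_on_seg A ⟨0, h0⟩ (fun v => v.val < m) hstep l hch i.val j.val hij
          j.isLt hbet
        simpa using this
      · push_neg at hbet
        obtain ⟨k, hk1, hk2, hk3⟩ := hbet
        have hkl : k < l.length := by omega
        have hknei : k ≠ i.val := by
          intro h; subst h
          exact hi (by simpa using hk3)
        have hknej : k ≠ j.val := by
          intro h
          apply hj
          have : (⟨k, hkl⟩ : Fin l.length) = j := Fin.ext h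
          rw [← this]; simpa using hk3
        have avoidHigh : ∀ t, (ht1 : j.val ≤ t) → (ht2 : t ≤ l.length - 1) →
            l.get ⟨t, by omega⟩ ≠ ⟨0, h0⟩ := by
          intro t ht1 ht2 hc
          have hk3' : l.get ⟨k, hkl⟩ = (⟨0, h0⟩ : Fin n) := hk3
          have hteq : t = k := by
            have := hnd.get_inj_iff.mp (hc.trans hk3'.symm)
            simpa [Fin.ext_iff] using this
          omega
        have avoidLow : ∀ t, (ht1 : 0 ≤ t) → (ht2 : t ≤ i.val) →
            l.get ⟨t, by omega⟩ ≠ ⟨0, h0⟩ := by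
          intro t ht1 ht2 hc
          have hk3' : l.get ⟨k, hkl⟩ = (⟨0, h0⟩ : Fin n) := hk3
          have hteq : t = k := by
            have := hnd.get_inj_iff.mp (hc.trans hk3'.symm)
            simpa [Fin.ext_iff] using this
          omega
        have s1 := const_on_seg A ⟨0, h0⟩ (fun v => v.val < m) hstep l hch j.val
          (l.length - 1) (by omega) (by omega) avoidHigh
        have s2 := const_on_seg A ⟨0, h0⟩ (fun v => v.val < m) hstep l hch 0 i.val
          (by omega) (by omega) avoidLow
        have s3 := hstep _ _ hwrap' (avoidHigh (l.length - 1) (by omega) le_rfl)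
          (avoidLow 0 (by omega) (by omega))
        have : (l.get j).val < m ↔ (l.get i).val < m := by
          have s1' : (l.get j).val < m ↔ (l.get ⟨l.length - 1, by omega⟩).val < m := by
            simpa using s1
          have s2' : (l.get ⟨0, by omega⟩).val < m ↔ (l.get i).val < m := by
            simpa using s2
          exact s1'.trans (s3.trans s2')
        exact this.symm
    have key : (l.get iz).val < m ↔ (l.get iy).val < m := by
      have hiyne : l.get iy ≠ ⟨0, h0⟩ := by rw [hiyg]; simp [Fin.ext_iff]; omega
      have hizne : l.get iz ≠ ⟨0, h0⟩ := by rw [hizg]; simp [Fin.ext_iff]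
      rcases le_total iz.val iy.val with h | h
      · exact main iz iy h hizne hiyne
      · exact (main iy iz h hiyne hizne).symm
    rw [hiyg, hizg] at key
    simp only [] at key
    omega
end
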